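/- Let k be a finite field of odd characteristic with q elements, δ = 0, and let J(k) be the group of invertible upper-triangular-type matrices [[a, x, z], [0, b, y], [0, 0, a]] with a, b ∈ k^×, x, y, z ∈ k, acting on the space j(k)ᵀ of lower-triangular matrices X(α, β, σ, τ, ν) = [[α,0,0],[σ,β,0],[ν,τ,α]] (α,β,σ,τ,ν ∈ k) by g·X = proj_{j(k)ᵀ}(g X g^{−1}), where the projection replaces entries above the diagonal by zeros and replaces the (1,1) and (3,3) entries by their average. Then the orbits are: (i) q² singleton orbits {X(α,β,0,0,0)}; (ii) q²(q−1) orbits of size q², one for each triple (ν, 2α+β, στ−βν) with ν ∈ k^×; (iii) q(q+1) orbits of size q(q−1), one for each pair (2α+β, [σ:τ]) with [σ:τ] ∈ P¹(k) and ν = 0. -/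

import Mathlib

/-- The action of an element `[[a,x,z],[0,b,y],[0,0,a]]` of `J(k)` (with `δ = 0`) on the
cross-section `j(k)ᵀ ≅ k⁵`, parametrised as `v = (α, β, σ, τ, ν)`, given by conjugation
followed by the projection onto the cross-section (display (7.2) of the paper). -/
def Jact {k : Type*} [Field k] (a b x y : k) (v : Fin 5 → k) : Fin 5 → k :=
  ![v 0 + x / (2 * a) * v 2 - y / (2 * b) * v 3 + x * y / (2 * a * b) * v 4,
    v 1 - x / a * v 2 + y / b * v 3 - x * y / (a * b) * v 4,
    b / a * v 2 + y / a * v 4,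
    a / b * v 3 - x / b * v 4,
    v 4]

/-- Orbit relation: `w` lies in the `J(k)`-orbit of `v`. -/
def Jrel {k : Type*} [Field k] (v w : Fin 5 → k) : Prop :=
  ∃ a b x y z : k, a ≠ 0 ∧ b ≠ 0 ∧ z = z ∧ w = Jact a b x y v

/-- The `J(k)`-orbit of `v`. -/
def Jorb {k : Type*} [Field k] (v : Fin 5 → k) : Set (Fin 5 → k) :=
  {w | Jrel v w}

section Aux

variable {k : Type*} [Field k]

omit [Field k] in
lemma fin5_ext {w v : Fin 5 → k} (h0 : w 0 = v 0) (h1 : w 1 = v 1) (h2 : w 2 = v 2)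
    (h3 : w 3 = v 3) (h4 : w 4 = v 4) : w = v := by
  funext i; fin_cases i; exacts [h0, h1, h2, h3, h4]

lemma Ja0 (a b x y : k) (v : Fin 5 → k) : Jact a b x y v 0
    = v 0 + x / (2 * a) * v 2 - y / (2 * b) * v 3 + x * y / (2 * a * b) * v 4 := rfl
lemma Ja1 (a b x y : k) (v : Fin 5 → k) : Jact a b x y v 1
    = v 1 - x / a * v 2 + y / b * v 3 - x * y / (a * b) * v 4 := rfl
lemma Ja2 (a b x y : k) (v : Fin 5 → k) : Jact a b x y v 2 = b / a * v 2 + y / a * v 4 := rfl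
lemma Ja3 (a b x y : k) (v : Fin 5 → k) : Jact a b x y v 3 = a / b * v 3 - x / b * v 4 := rfl
lemma Ja4 (a b x y : k) (v : Fin 5 → k) : Jact a b x y v 4 = v 4 := rfl

lemma Jact_id (v : Fin 5 → k) : Jact 1 1 0 0 v = v := by
  apply fin5_ext <;> simp [Ja0, Ja1, Ja2, Ja3, Ja4]

lemma Jrel_refl (v : Fin 5 → k) : Jrel v v :=
  ⟨1, 1, 0, 0, 0, one_ne_zero, one_ne_zero, rfl, (Jact_id v).symm⟩

lemma mem_Jorb_self (v : Fin 5 → k) : v ∈ Jorb v := Jrel_refl v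

/-- Characterization of the orbit relation when `ν ≠ 0`. -/
lemma Jrel_iff_nu {v : Fin 5 → k} (h2 : (2:k) ≠ 0) (h4 : v 4 ≠ 0) (w : Fin 5 → k) :
    Jrel v w ↔ (w 4 = v 4 ∧ 2 * w 0 + w 1 = 2 * v 0 + v 1 ∧
      w 2 * w 3 - w 1 * w 4 = v 2 * v 3 - v 1 * v 4) := by
  constructor
  · rintro ⟨a, b, x, y, z, ha, hb, -, rfl⟩
    have h2a : 2 * a ≠ 0 := mul_ne_zero h2 ha
    have h2b : 2 * b ≠ 0 := mul_ne_zero h2 hb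
    have h2ab : 2 * a * b ≠ 0 := mul_ne_zero h2a hb
    have hab : a * b ≠ 0 := mul_ne_zero ha hb
    refine ⟨rfl, ?_, ?_⟩
    · rw [Ja0, Ja1]; field_simp; ring
    · rw [Ja1, Ja2, Ja3, Ja4]; field_simp; ring
  · rintro ⟨e4, e0, e1⟩
    rw [e4] at e1
    refine ⟨1, 1, (v 3 - w 3) / v 4, (w 2 - v 2) / v 4, 0, one_ne_zero, one_ne_zero, rfl, ?_⟩
    symm
    apply fin5_ext
    · rw [Ja0]; field_simp
      linear_combination (-(v 4)) * e0 - e1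
    · rw [Ja1]; field_simp
      linear_combination e1
    · rw [Ja2]; field_simp; ring
    · rw [Ja3]; field_simp; ring
    · rw [Ja4]; exact e4.symm

/-- The orbit when `ν ≠ 0`, as an explicit level set. -/
lemma Jorb_nu_eq {v : Fin 5 → k} (h2 : (2:k) ≠ 0) (h4 : v 4 ≠ 0) :
    Jorb v = {w | w 4 = v 4 ∧ 2 * w 0 + w 1 = 2 * v 0 + v 1 ∧
      w 2 * w 3 - w 1 * w 4 = v 2 * v 3 - v 1 * v 4} :=
  Set.ext fun w => Jrel_iff_nu h2 h4 w

/-- Characterization of the orbit relation when `ν = 0` and `(σ,τ) ≠ (0,0)`. -/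
lemma Jrel_iff_zero {v : Fin 5 → k} (h2 : (2:k) ≠ 0) (h4 : v 4 = 0)
    (hst : ¬(v 2 = 0 ∧ v 3 = 0)) (w : Fin 5 → k) :
    Jrel v w ↔ (w 4 = 0 ∧ 2 * w 0 + w 1 = 2 * v 0 + v 1 ∧
      ∃ l : k, l ≠ 0 ∧ w 2 = l * v 2 ∧ w 3 = l⁻¹ * v 3) := by
  constructor
  · rintro ⟨a, b, x, y, z, ha, hb, -, rfl⟩
    have h2a : 2 * a ≠ 0 := mul_ne_zero h2 ha
    have h2b : 2 * b ≠ 0 := mul_ne_zero h2 hb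
    have h2ab : 2 * a * b ≠ 0 := mul_ne_zero h2a hb
    have hab : a * b ≠ 0 := mul_ne_zero ha hb
    refine ⟨by rw [Ja4, h4], ?_, b / a, div_ne_zero hb ha, ?_, ?_⟩
    · rw [Ja0, Ja1, h4]; field_simp; ring
    · rw [Ja2, h4]; ring
    · rw [Ja3, h4, inv_div]; ring
  · rintro ⟨e4, e0, l, hl, e2, e3⟩
    by_cases hv2 : v 2 = 0
    · have hv3 : v 3 ≠ 0 := fun h => hst ⟨hv2, h⟩
      refine ⟨1, l, 0, l * (w 1 - v 1) / v 3, 0, one_ne_zero, hl, rfl, ?_⟩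
      symm
      apply fin5_ext
      · rw [Ja0, h4, hv2]; field_simp
        linear_combination (-(v 3)) * e0
      · rw [Ja1, h4, hv2]; field_simp; ring
      · rw [Ja2, h4, e2, hv2]; ring
      · rw [Ja3, h4, e3]; field_simp; ring
      · rw [Ja4, h4, e4]
    · refine ⟨1, l, (v 1 - w 1) / v 2, 0, 0, one_ne_zero, hl, rfl, ?_⟩
      symm
      apply fin5_ext
      · rw [Ja0, h4]; field_simp
        linear_combination (-(v 2 * l)) * e0
      · rw [Ja1, h4]; field_simp; ring
      · rw [Ja2, h4, e2]; field_simp; ring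
      · rw [Ja3, h4, e3]; field_simp; ring
      · rw [Ja4, h4, e4]

lemma Jorb_zero_eq {v : Fin 5 → k} (h2 : (2:k) ≠ 0) (h4 : v 4 = 0)
    (hst : ¬(v 2 = 0 ∧ v 3 = 0)) :
    Jorb v = {w | w 4 = 0 ∧ 2 * w 0 + w 1 = 2 * v 0 + v 1 ∧
      ∃ l : k, l ≠ 0 ∧ w 2 = l * v 2 ∧ w 3 = l⁻¹ * v 3} :=
  Set.ext fun w => Jrel_iff_zero h2 h4 hst w

/-- Rescaling lemma for the `(σ,τ)`-pair condition. -/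
lemma lrel_iff {v2 v3 v2' v3' w2 w3 l0 : k} (hl0 : l0 ≠ 0)
    (h2' : v2' = l0 * v2) (h3' : v3' = l0⁻¹ * v3) :
    (∃ l : k, l ≠ 0 ∧ w2 = l * v2 ∧ w3 = l⁻¹ * v3)
      ↔ (∃ l : k, l ≠ 0 ∧ w2 = l * v2' ∧ w3 = l⁻¹ * v3') := by
  subst h2' h3'
  constructor
  · rintro ⟨l, hl, rfl, rfl⟩
    exact ⟨l * l0⁻¹, mul_ne_zero hl (inv_ne_zero hl0), by field_simp, by field_simp; try ring⟩
  · rintro ⟨l, hl, rfl, rfl⟩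
    exact ⟨l * l0, mul_ne_zero hl hl0, by ring, by field_simp; try ring⟩

/-- Parametrization of an orbit with `ν ≠ 0`. -/
def onu {k : Type*} [Field k] (v : Fin 5 → k) (p : k × k) : Fin 5 → k :=
  ![(2 * v 0 + v 1 - (p.1 * p.2 - (v 2 * v 3 - v 1 * v 4)) / v 4) / 2,
    (p.1 * p.2 - (v 2 * v 3 - v 1 * v 4)) / v 4, p.1, p.2, v 4]

lemma onu_inj (v : Fin 5 → k) : Function.Injective (onu v) := by
  intro p p' h
  have h2 : p.1 = p'.1 := congrFun h 2
  have h3 : p.2 = p'.2 := congrFun h 3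
  exact Prod.ext h2 h3

lemma onu_image {v : Fin 5 → k} (h2 : (2:k) ≠ 0) (h4 : v 4 ≠ 0) :
    Jorb v = onu v '' Set.univ := by
  rw [Jorb_nu_eq h2 h4]
  ext w
  simp only [Set.mem_setOf_eq, Set.image_univ, Set.mem_range]
  constructor
  · rintro ⟨e4, e0, e1⟩
    rw [e4] at e1
    refine ⟨(w 2, w 3), ?_⟩
    apply fin5_ext
    · show (2 * v 0 + v 1 - (w 2 * w 3 - (v 2 * v 3 - v 1 * v 4)) / v 4) / 2 = w 0
      field_simp
      linear_combination (-(v 4)) * e0 - e1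
    · show (w 2 * w 3 - (v 2 * v 3 - v 1 * v 4)) / v 4 = w 1
      field_simp
      linear_combination e1
    · rfl
    · rfl
    · exact e4.symm
  · rintro ⟨p, rfl⟩
    refine ⟨rfl, ?_, ?_⟩
    · show 2 * ((2 * v 0 + v 1 - (p.1 * p.2 - (v 2 * v 3 - v 1 * v 4)) / v 4) / 2)
        + (p.1 * p.2 - (v 2 * v 3 - v 1 * v 4)) / v 4 = 2 * v 0 + v 1
      field_simp
      ring
    · show p.1 * p.2 - (p.1 * p.2 - (v 2 * v 3 - v 1 * v 4)) / v 4 * v 4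
        = v 2 * v 3 - v 1 * v 4
      field_simp
      ring

/-- Parametrization of an orbit with `ν = 0`, `(σ,τ) ≠ (0,0)`. -/
def ozr {k : Type*} [Field k] (v : Fin 5 → k) (p : k × {l : k // l ≠ 0}) : Fin 5 → k :=
  ![(2 * v 0 + v 1 - p.1) / 2, p.1, p.2.1 * v 2, (p.2.1)⁻¹ * v 3, 0]

lemma ozr_inj {v : Fin 5 → k} (hst : ¬(v 2 = 0 ∧ v 3 = 0)) :
    Function.Injective (ozr v) := by
  intro p p' h
  have h1 : p.1 = p'.1 := congrFun h 1
  have h2 : p.2.1 * v 2 = p'.2.1 * v 2 := congrFun h 2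
  have h3 : (p.2.1)⁻¹ * v 3 = (p'.2.1)⁻¹ * v 3 := congrFun h 3
  refine Prod.ext h1 (Subtype.ext ?_)
  by_cases hv2 : v 2 = 0
  · have hv3 : v 3 ≠ 0 := fun h => hst ⟨hv2, h⟩
    have := mul_right_cancel₀ hv3 h3
    exact inv_injective this
  · exact mul_right_cancel₀ hv2 h2

lemma ozr_image {v : Fin 5 → k} (h2 : (2:k) ≠ 0) (h4 : v 4 = 0)
    (hst : ¬(v 2 = 0 ∧ v 3 = 0)) :
    Jorb v = ozr v '' Set.univ := by
  rw [Jorb_zero_eq h2 h4 hst]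
  ext w
  simp only [Set.mem_setOf_eq, Set.image_univ, Set.mem_range]
  constructor
  · rintro ⟨e4, e0, l, hl, e2, e3⟩
    refine ⟨(w 1, ⟨l, hl⟩), ?_⟩
    apply fin5_ext
    · show (2 * v 0 + v 1 - w 1) / 2 = w 0
      field_simp
      linear_combination -e0
    · rfl
    · exact e2.symm
    · exact e3.symm
    · exact e4.symm
  · rintro ⟨p, rfl⟩
    refine ⟨rfl, ?_, p.2.1, p.2.2, rfl, rfl⟩
    show 2 * ((2 * v 0 + v 1 - p.1) / 2) + p.1 = 2 * v 0 + v 1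
    field_simp
    ring

/-- Representative of an orbit with `ν ≠ 0` and invariants `(n, c, d)`. -/
def rep2 {k : Type*} [Field k] (n c d : k) : Fin 5 → k :=
  ![(c + d / n) / 2, -(d / n), 0, 0, n]

lemma rep2_inv1 (n c d : k) : rep2 n c d 4 = n := rfl

lemma rep2_inv2 {n : k} (h2 : (2:k) ≠ 0) (hn : n ≠ 0) (c d : k) :
    2 * rep2 n c d 0 + rep2 n c d 1 = c := by
  show 2 * ((c + d / n) / 2) + -(d / n) = c
  field_simp
  ring

lemma rep2_inv3 {n : k} (hn : n ≠ 0) (c d : k) :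
    rep2 n c d 2 * rep2 n c d 3 - rep2 n c d 1 * rep2 n c d 4 = d := by
  show (0:k) * 0 - -(d / n) * n = d
  field_simp
  ring

lemma Jorb_rep2 {n : k} (h2 : (2:k) ≠ 0) (hn : n ≠ 0) (c d : k) :
    Jorb (rep2 n c d) = {w | w 4 = n ∧ 2 * w 0 + w 1 = c ∧
      w 2 * w 3 - w 1 * w 4 = d} := by
  rw [Jorb_nu_eq h2 (show rep2 n c d 4 ≠ 0 from hn)]
  rw [rep2_inv3 hn, rep2_inv2 h2 hn, rep2_inv1]

/-- Representative of an orbit with `ν = 0` and invariants `(c, o)`. -/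
def rep3 {k : Type*} [Field k] (c : k) (o : Option k) : Fin 5 → k :=
  match o with
  | none => ![c / 2, 0, 0, 1, 0]
  | some p => ![c / 2, 0, 1, p, 0]

lemma rep3_e4 (c : k) (o : Option k) : rep3 c o 4 = 0 := by cases o <;> rfl
lemma rep3_e0 (c : k) (o : Option k) : rep3 c o 0 = c / 2 := by cases o <;> rfl
lemma rep3_e1 (c : k) (o : Option k) : rep3 c o 1 = 0 := by cases o <;> rfl

lemma rep3_nst (c : k) (o : Option k) : ¬(rep3 c o 2 = 0 ∧ rep3 c o 3 = 0) := by
  cases o with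
  | none => rintro ⟨-, h⟩; exact one_ne_zero h
  | some p => rintro ⟨h, -⟩; exact one_ne_zero h

lemma rep3_inv2 {c : k} (h2 : (2:k) ≠ 0) (o : Option k) :
    2 * rep3 c o 0 + rep3 c o 1 = c := by
  rw [rep3_e0, rep3_e1]; field_simp; ring

lemma Jorb_rep3 (h2 : (2:k) ≠ 0) (c : k) (o : Option k) :
    Jorb (rep3 c o) = {w | w 4 = 0 ∧ 2 * w 0 + w 1 = c ∧
      ∃ l : k, l ≠ 0 ∧ w 2 = l * rep3 c o 2 ∧ w 3 = l⁻¹ * rep3 c o 3} := by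
  rw [Jorb_zero_eq h2 (rep3_e4 c o) (rep3_nst c o), rep3_inv2 h2]

end Aux

theorem J_coadjoint_orbits_field_case
    (k : Type*) [Field k] [Fintype k] (hchar : ringChar k ≠ 2)
    (q : ℕ) (hq : q = Fintype.card k) :
    -- (i) singleton orbits
    (∀ v : Fin 5 → k, v 2 = 0 → v 3 = 0 → v 4 = 0 → Jorb v = {v}) ∧
    ({v : Fin 5 → k | v 2 = 0 ∧ v 3 = 0 ∧ v 4 = 0}.ncard = q ^ 2) ∧
    -- (ii) orbits with ν ≠ 0: size q², classified by (ν, 2α+β, στ−βν)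
    (∀ v : Fin 5 → k, v 4 ≠ 0 →
      (Jorb v).ncard = q ^ 2 ∧
      ∀ w : Fin 5 → k, Jrel v w ↔
        (w 4 = v 4 ∧ 2 * w 0 + w 1 = 2 * v 0 + v 1 ∧
          w 2 * w 3 - w 1 * w 4 = v 2 * v 3 - v 1 * v 4)) ∧
    ({S : Set (Fin 5 → k) | ∃ v, v 4 ≠ 0 ∧ S = Jorb v}.ncard = q ^ 2 * (q - 1)) ∧
    -- (iii) orbits with ν = 0, (σ,τ) ≠ (0,0): size q(q−1), q(q+1) of them,
    -- one for each pair (2α+β, point of P¹(k))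
    (∀ v : Fin 5 → k, v 4 = 0 → ¬(v 2 = 0 ∧ v 3 = 0) →
      (Jorb v).ncard = q * (q - 1)) ∧
    ({S : Set (Fin 5 → k) | ∃ v, v 4 = 0 ∧ ¬(v 2 = 0 ∧ v 3 = 0) ∧ S = Jorb v}.ncard
        = q * (q + 1)) ∧
    Nonempty ({S : Set (Fin 5 → k) // ∃ v, v 4 = 0 ∧ ¬(v 2 = 0 ∧ v 3 = 0) ∧ S = Jorb v}
        ≃ k × Projectivization k (Fin 2 → k)) := by
  classical
  have h2 : (2:k) ≠ 0 := by
    intro h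
    have hd : ringChar k ∣ 2 := ringChar.dvd (by exact_mod_cast h)
    rcases (Nat.dvd_prime Nat.prime_two).1 hd with h1 | h1
    · exact CharP.ringChar_ne_one h1
    · exact hchar h1
  -- (i) first part
  have part1 : ∀ v : Fin 5 → k, v 2 = 0 → v 3 = 0 → v 4 = 0 → Jorb v = {v} := by
    intro v hv2 hv3 hv4
    ext w
    simp only [Jorb, Set.mem_setOf_eq, Set.mem_singleton_iff]
    constructor
    · rintro ⟨a, b, x, y, z, ha, hb, -, rfl⟩
      apply fin5_ext
      · rw [Ja0, hv2, hv3, hv4]; ring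
      · rw [Ja1, hv2, hv3, hv4]; ring
      · rw [Ja2, hv2, hv4]; ring
      · rw [Ja3, hv3, hv4]; ring
      · rw [Ja4]
    · rintro rfl; exact Jrel_refl _
  -- (i) count
  have part2 : ({v : Fin 5 → k | v 2 = 0 ∧ v 3 = 0 ∧ v 4 = 0}).ncard = q ^ 2 := by
    have himg : {v : Fin 5 → k | v 2 = 0 ∧ v 3 = 0 ∧ v 4 = 0}
        = (fun p : k × k => ![p.1, p.2, 0, 0, 0]) '' Set.univ := by
      ext v
      simp only [Set.mem_setOf_eq, Set.image_univ, Set.mem_range]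
      constructor
      · rintro ⟨hv2, hv3, hv4⟩
        refine ⟨(v 0, v 1), ?_⟩
        apply fin5_ext
        · rfl
        · rfl
        · exact hv2.symm
        · exact hv3.symm
        · exact hv4.symm
      · rintro ⟨p, rfl⟩
        exact ⟨rfl, rfl, rfl⟩
    have hinj : Function.Injective (fun p : k × k => (![p.1, p.2, 0, 0, 0] : Fin 5 → k)) := by
      intro p p' h
      exact Prod.ext (congrFun h 0) (congrFun h 1)
    rw [himg, Set.ncard_image_of_injective _ hinj, Set.ncard_univ,
      Nat.card_eq_fintype_card, Fintype.card_prod, hq, sq]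
  -- (ii) orbits
  have part3 : ∀ v : Fin 5 → k, v 4 ≠ 0 →
      (Jorb v).ncard = q ^ 2 ∧
      ∀ w : Fin 5 → k, Jrel v w ↔
        (w 4 = v 4 ∧ 2 * w 0 + w 1 = 2 * v 0 + v 1 ∧
          w 2 * w 3 - w 1 * w 4 = v 2 * v 3 - v 1 * v 4) := by
    intro v hv4
    refine ⟨?_, fun w => Jrel_iff_nu h2 hv4 w⟩
    rw [onu_image h2 hv4, Set.ncard_image_of_injective _ (onu_inj v), Set.ncard_univ,
      Nat.card_eq_fintype_card, Fintype.card_prod, hq, sq]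
  -- (ii) orbit count
  have part4 : ({S : Set (Fin 5 → k) | ∃ v, v 4 ≠ 0 ∧ S = Jorb v}).ncard
      = q ^ 2 * (q - 1) := by
    have himg : {S : Set (Fin 5 → k) | ∃ v, v 4 ≠ 0 ∧ S = Jorb v}
        = (fun p : {n : k // n ≠ 0} × k × k => Jorb (rep2 p.1.1 p.2.1 p.2.2)) '' Set.univ := by
      ext S
      simp only [Set.mem_setOf_eq, Set.image_univ, Set.mem_range]
      constructor
      · rintro ⟨v, hv4, rfl⟩
        refine ⟨(⟨v 4, hv4⟩, 2 * v 0 + v 1, v 2 * v 3 - v 1 * v 4), ?_⟩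
        rw [Jorb_rep2 h2 hv4, Jorb_nu_eq h2 hv4]
      · rintro ⟨p, rfl⟩
        exact ⟨rep2 p.1.1 p.2.1 p.2.2, p.1.2, rfl⟩
    have hinj : Function.Injective
        (fun p : {n : k // n ≠ 0} × k × k => Jorb (rep2 p.1.1 p.2.1 p.2.2)) := by
      rintro ⟨⟨n, hn⟩, c, d⟩ ⟨⟨n', hn'⟩, c', d'⟩ h
      simp only at h
      have hmem : rep2 n' c' d' ∈ Jorb (rep2 n c d) := by
        rw [h]; exact mem_Jorb_self _
      rw [Jorb_rep2 h2 hn] at hmem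
      obtain ⟨m4, m0, m1⟩ := hmem
      rw [rep2_inv1] at m4
      rw [rep2_inv2 h2 hn'] at m0
      rw [rep2_inv3 hn'] at m1
      simp only [Prod.mk.injEq, Subtype.mk.injEq]
      exact ⟨m4.symm, m0.symm, m1.symm⟩
    rw [himg, Set.ncard_image_of_injective _ hinj, Set.ncard_univ,
      Nat.card_eq_fintype_card, Fintype.card_prod, Fintype.card_prod]
    have hu : Fintype.card {n : k // n ≠ 0} = q - 1 := by
      rw [Fintype.card_congr (unitsEquivNeZero (G₀ := k)).symm, Fintype.card_units, hq]
    rw [hu, hq]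
    generalize (Fintype.card k - 1) = m
    ring
  -- (iii) orbit sizes
  have part5 : ∀ v : Fin 5 → k, v 4 = 0 → ¬(v 2 = 0 ∧ v 3 = 0) →
      (Jorb v).ncard = q * (q - 1) := by
    intro v hv4 hst
    rw [ozr_image h2 hv4 hst, Set.ncard_image_of_injective _ (ozr_inj hst), Set.ncard_univ,
      Nat.card_eq_fintype_card, Fintype.card_prod]
    have hu : Fintype.card {l : k // l ≠ 0} = q - 1 := by
      rw [Fintype.card_congr (unitsEquivNeZero (G₀ := k)).symm, Fintype.card_units, hq]
    rw [hu, hq]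
  -- (iii) orbit classification map
  have key3 : ∀ v : Fin 5 → k, v 4 = 0 → ¬(v 2 = 0 ∧ v 3 = 0) →
      ∃ o : Option k, Jorb v = Jorb (rep3 (2 * v 0 + v 1) o) := by
    intro v hv4 hst
    by_cases hv2 : v 2 = 0
    · have hv3 : v 3 ≠ 0 := fun h => hst ⟨hv2, h⟩
      refine ⟨none, ?_⟩
      rw [Jorb_rep3 h2, Jorb_zero_eq h2 hv4 hst]
      ext w
      simp only [Set.mem_setOf_eq, and_congr_right_iff]
      intro _ _
      have ha2 : rep3 (2 * v 0 + v 1) none 2 = v 3 * v 2 := by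
        rw [hv2, mul_zero]; rfl
      have ha3 : rep3 (2 * v 0 + v 1) none 3 = (v 3)⁻¹ * v 3 := by
        show (1:k) = (v 3)⁻¹ * v 3
        field_simp
      exact lrel_iff hv3 ha2 ha3
    · refine ⟨some (v 2 * v 3), ?_⟩
      rw [Jorb_rep3 h2, Jorb_zero_eq h2 hv4 hst]
      ext w
      simp only [Set.mem_setOf_eq, and_congr_right_iff]
      intro _ _
      have ha2 : rep3 (2 * v 0 + v 1) (some (v 2 * v 3)) 2 = (v 2)⁻¹ * v 2 := by
        show (1:k) = (v 2)⁻¹ * v 2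
        field_simp
      have ha3 : rep3 (2 * v 0 + v 1) (some (v 2 * v 3)) 3 = ((v 2)⁻¹)⁻¹ * v 3 := by
        show v 2 * v 3 = ((v 2)⁻¹)⁻¹ * v 3
        rw [inv_inv]
      exact lrel_iff (inv_ne_zero hv2) ha2 ha3
  have g3inj : Function.Injective
      (fun p : k × Option k => Jorb (rep3 p.1 p.2)) := by
    rintro ⟨c, o⟩ ⟨c', o'⟩ h
    simp only at h
    have hmem : rep3 c' o' ∈ Jorb (rep3 c o) := by
      rw [h]; exact mem_Jorb_self _
    rw [Jorb_rep3 h2] at hmem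
    obtain ⟨-, m0, l, hl, m2, m3⟩ := hmem
    rw [rep3_inv2 h2] at m0
    have ho : o = o' := by
      cases o with
      | none =>
        cases o' with
        | none => rfl
        | some p' =>
          exfalso
          have : (1:k) = l * 0 := m2
          rw [mul_zero] at this
          exact one_ne_zero this
      | some p =>
        cases o' with
        | none =>
          exfalso
          have : (0:k) = l * 1 := m2
          rw [mul_one] at this
          exact hl this.symm
        | some p' =>
          have hl1 : (1:k) = l * 1 := m2
          rw [mul_one] at hl1
          have hp : p' = l⁻¹ * p := m3
          rw [← hl1, inv_one, one_mul] at hp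
          rw [hp]
    exact Prod.ext m0.symm ho
  have keyset : {S : Set (Fin 5 → k) | ∃ v, v 4 = 0 ∧ ¬(v 2 = 0 ∧ v 3 = 0) ∧ S = Jorb v}
      = (fun p : k × Option k => Jorb (rep3 p.1 p.2)) '' Set.univ := by
    ext S
    simp only [Set.mem_setOf_eq, Set.image_univ, Set.mem_range]
    constructor
    · rintro ⟨v, hv4, hst, rfl⟩
      obtain ⟨o, ho⟩ := key3 v hv4 hst
      exact ⟨(2 * v 0 + v 1, o), ho.symm⟩
    · rintro ⟨p, rfl⟩
      exact ⟨rep3 p.1 p.2, rep3_e4 p.1 p.2, rep3_nst p.1 p.2, rfl⟩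
  have part6 : ({S : Set (Fin 5 → k) | ∃ v, v 4 = 0 ∧ ¬(v 2 = 0 ∧ v 3 = 0) ∧ S = Jorb v}).ncard
      = q * (q + 1) := by
    rw [keyset, Set.ncard_image_of_injective _ g3inj, Set.ncard_univ,
      Nat.card_eq_fintype_card, Fintype.card_prod, Fintype.card_option, hq]
  -- the equivalence
  have part7 : Nonempty
      ({S : Set (Fin 5 → k) // ∃ v, v 4 = 0 ∧ ¬(v 2 = 0 ∧ v 3 = 0) ∧ S = Jorb v}
        ≃ k × Projectivization k (Fin 2 → k)) := by
    -- first, the subtype is equivalent to `k × Option k`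
    have hne1 : (![(1:k), 0] : Fin 2 → k) ≠ 0 := by
      intro h
      have := congrFun h 0
      simp at this
    have hne2 : ∀ x : k, (![x, 1] : Fin 2 → k) ≠ 0 := by
      intro x h
      have := congrFun h 1
      simp at this
    let f : Option k → Projectivization k (Fin 2 → k) := fun o =>
      match o with
      | none => Projectivization.mk k ![1, 0] hne1
      | some x => Projectivization.mk k ![x, 1] (hne2 x)
    have hf : Function.Bijective f := by
      constructor
      · intro o o' h
        cases o with
        | none =>
          cases o' with
          | none => rfl
          | some x' =>
            exfalso
            rw [show f none = Projectivization.mk k ![1,0] hne1 from rfl,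
              show f (some x') = Projectivization.mk k ![x',1] (hne2 x') from rfl,
              Projectivization.mk_eq_mk_iff] at h
            obtain ⟨a, ha⟩ := h
            have h1 := congrFun ha 1
            simp [Pi.smul_apply, Units.smul_def] at h1
        | some x =>
          cases o' with
          | none =>
            exfalso
            rw [show f (some x) = Projectivization.mk k ![x,1] (hne2 x) from rfl,
              show f none = Projectivization.mk k ![1,0] hne1 from rfl,
              Projectivization.mk_eq_mk_iff] at h
            obtain ⟨a, ha⟩ := h
            have h1 := congrFun ha 1
            simp [Pi.smul_apply, Units.smul_def] at h1
          | some x' =>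
            rw [show f (some x) = Projectivization.mk k ![x,1] (hne2 x) from rfl,
              show f (some x') = Projectivization.mk k ![x',1] (hne2 x') from rfl,
              Projectivization.mk_eq_mk_iff] at h
            obtain ⟨a, ha⟩ := h
            have h1 := congrFun ha 1
            have h0 := congrFun ha 0
            simp only [Pi.smul_apply, Units.smul_def, smul_eq_mul, Matrix.cons_val_one,
              Matrix.head_cons, Matrix.cons_val_zero, mul_one] at h1 h0
            rw [h1, one_mul] at h0
            exact congrArg some h0.symm
      · intro P
        induction P using Projectivization.ind with
        | h u hu =>
          by_cases h1 : u 1 = 0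
          · have h0 : u 0 ≠ 0 := by
              intro h0
              apply hu
              funext i
              fin_cases i
              · exact h0
              · exact h1
            refine ⟨none, ?_⟩
            show Projectivization.mk k ![1,0] hne1 = Projectivization.mk k u hu
            rw [Projectivization.mk_eq_mk_iff']
            refine ⟨(u 0)⁻¹, ?_⟩
            funext i
            fin_cases i
            · simp [Pi.smul_apply, inv_mul_cancel₀ h0]
            · simp [Pi.smul_apply, h1]
          · refine ⟨some (u 0 / u 1), ?_⟩
            show Projectivization.mk k ![u 0 / u 1, 1] (hne2 _) = Projectivization.mk k u hu
            rw [Projectivization.mk_eq_mk_iff']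
            refine ⟨(u 1)⁻¹, ?_⟩
            funext i
            fin_cases i
            · simp [Pi.smul_apply, div_eq_inv_mul]
            · simp [Pi.smul_apply, inv_mul_cancel₀ h1]
    let g3' : k × Option k →
        {S : Set (Fin 5 → k) // ∃ v, v 4 = 0 ∧ ¬(v 2 = 0 ∧ v 3 = 0) ∧ S = Jorb v} :=
      fun p => ⟨Jorb (rep3 p.1 p.2), rep3 p.1 p.2, rep3_e4 p.1 p.2, rep3_nst p.1 p.2, rfl⟩
    have hg3' : Function.Bijective g3' := by
      constructor
      · intro p p' h
        apply g3inj
        simpa [g3', Subtype.mk.injEq] using congrArg Subtype.val h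
      · rintro ⟨S, v, hv4, hst, rfl⟩
        obtain ⟨o, ho⟩ := key3 v hv4 hst
        exact ⟨(2 * v 0 + v 1, o), Subtype.ext ho.symm⟩
    exact ⟨(Equiv.ofBijective g3' hg3').symm.trans
      ((Equiv.refl k).prodCongr (Equiv.ofBijective f hf))⟩
  exact ⟨part1, part2, part3, part4, part5, part6, part7⟩
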